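/- Let α ≥ ω₁ be a regular cardinal and 0 < n < ω. Then there exists no prime map from C⁻(α,n) to C⁻(α,n+1), i.e., no continuous map f : C⁻(α,n) → C⁻(α,n+1) with f⁻¹(∞) = {∞}. -/

import Mathlib

universe u v

/-- `CIdx K m` represents the set `αⁿ` for `n = m+1`, where `K` plays the role of `α`. -/
def CIdx (K : Type u) : ℕ → Type u
  | 0 => K
  | m + 1 => K × CIdx K m

/-- Given a subset `U` of `(α × αⁿ) ∪ {∞}` and `ξ`, the set `{x ∈ αⁿ : (ξ,x) ∈ U} ∪ {∞}`. -/
def cslice {K J : Type u} (U : Set (Option (K × J))) (ξ : K) : Set (Option J) :=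
  insert none (Option.some '' {x : J | Option.some (ξ, x) ∈ U})

/-- The openness predicate of the space `C⁻(α, m+1)`. -/
def CIsOpen (K : Type u) : (m : ℕ) → Set (Option (CIdx K m)) → Prop
  | 0, U => none ∈ U → Cardinal.mk ((Option.some ⁻¹' U)ᶜ : Set K) < Cardinal.mk K
  | m + 1, U => none ∈ U →
      Cardinal.mk (({ξ : K | CIsOpen K m (cslice U ξ)}ᶜ : Set K)) < Cardinal.mk K

theorem cslice_mono {K J : Type u} {U V : Set (Option (K × J))} (h : U ⊆ V) (ξ : K) :
    cslice U ξ ⊆ cslice V ξ := by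
  intro z hz
  rcases hz with hz | hz
  · exact Or.inl hz
  · rcases hz with ⟨x, hx, rfl⟩
    exact Or.inr ⟨x, h hx, rfl⟩

theorem none_mem_cslice {K J : Type u} (U : Set (Option (K × J))) (ξ : K) :
    none ∈ cslice U ξ := Set.mem_insert _ _

theorem cisOpen_of_none_not_mem (K : Type u) (m : ℕ) (U : Set (Option (CIdx K m)))
    (h : none ∉ U) : CIsOpen K m U := by
  cases m with
  | zero => exact fun hU => absurd hU h
  | succ m => exact fun hU => absurd hU h

theorem cisOpen_mono (K : Type u) (m : ℕ) :
    ∀ U V : Set (Option (CIdx K m)), CIsOpen K m U → U ⊆ V → (none ∈ V → none ∈ U) →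
      CIsOpen K m V := by
  induction m with
  | zero =>
    intro U V hU hUV hnone hV
    refine lt_of_le_of_lt (Cardinal.mk_le_mk_of_subset ?_) (hU (hnone hV))
    intro k hk hU'
    exact hk (hUV hU')
  | succ m ih =>
    intro U V hU hUV hnone hV
    refine lt_of_le_of_lt (Cardinal.mk_le_mk_of_subset ?_) (hU (hnone hV))
    intro ξ hξ hopen
    exact hξ (ih _ _ hopen (cslice_mono hUV ξ) (fun _ => none_mem_cslice U ξ))

theorem cslice_univ {K J : Type u} (ξ : K) :
    cslice (Set.univ : Set (Option (K × J))) ξ = Set.univ := by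
  ext z
  cases z with
  | none => simp [cslice]
  | some j => simp [cslice]

theorem cisOpen_univ (K : Type u) [Nonempty K] (m : ℕ) : CIsOpen K m Set.univ := by
  cases m with
  | zero =>
    intro _
    show Cardinal.mk ((Option.some ⁻¹' (Set.univ : Set (Option K)))ᶜ : Set K) < Cardinal.mk K
    simp only [Set.preimage_univ, Set.compl_univ, Cardinal.mk_emptyCollection]
    exact Cardinal.mk_ne_zero K |>.bot_lt
  | succ m =>
    intro _
    have h : ({ξ : K | CIsOpen K m (cslice (Set.univ : Set (Option (CIdx K (m+1)))) ξ)}ᶜ : Set K)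
        = ∅ := by
      ext ξ
      simp only [Set.mem_compl_iff, Set.mem_setOf_eq, Set.mem_empty_iff_false, iff_false, not_not]
      rw [show cslice (Set.univ : Set (Option (CIdx K (m+1)))) ξ = Set.univ from cslice_univ ξ]
      exact cisOpen_univ K m
    rw [h, Cardinal.mk_emptyCollection]
    exact Cardinal.mk_ne_zero K |>.bot_lt

theorem some_mem_cslice_iff {K J : Type u} (U : Set (Option (K × J))) (ξ : K) (x : J) :
    some x ∈ cslice U ξ ↔ some (ξ, x) ∈ U := by
  simp [cslice]

theorem cslice_inter {K J : Type u} (U V : Set (Option (K × J))) (ξ : K) :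
    cslice (U ∩ V) ξ = cslice U ξ ∩ cslice V ξ := by
  ext z
  cases z with
  | none => simp [none_mem_cslice]
  | some x => simp [some_mem_cslice_iff]

theorem cisOpen_inter (K : Type u) [Infinite K] (m : ℕ) :
    ∀ U V : Set (Option (CIdx K m)), CIsOpen K m U → CIsOpen K m V →
      CIsOpen K m (U ∩ V) := by
  induction m with
  | zero =>
    intro U V hU hV h
    have hsub : ((Option.some ⁻¹' (U ∩ V))ᶜ : Set K) ⊆
        (Option.some ⁻¹' U)ᶜ ∪ (Option.some ⁻¹' V)ᶜ := by
      intro k hk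
      by_cases h1 : (some k : Option (CIdx K 0)) ∈ U
      · exact Or.inr (show (some k : Option (CIdx K 0)) ∉ V from fun h2 => hk ⟨h1, h2⟩)
      · exact Or.inl h1
    refine lt_of_le_of_lt (Cardinal.mk_le_mk_of_subset hsub) ?_
    refine lt_of_le_of_lt (Cardinal.mk_union_le _ _) ?_
    exact Cardinal.add_lt_of_lt (Cardinal.aleph0_le_mk K) (hU h.1) (hV h.2)
  | succ m ih =>
    intro U V hU hV h
    have hsub : ({ξ : K | CIsOpen K m (cslice (U ∩ V) ξ)}ᶜ : Set K) ⊆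
        {ξ : K | CIsOpen K m (cslice U ξ)}ᶜ ∪ {ξ : K | CIsOpen K m (cslice V ξ)}ᶜ := by
      intro ξ hξ
      by_contra hc
      simp only [Set.mem_union, Set.mem_compl_iff, Set.mem_setOf_eq, not_not] at hc hξ
      push_neg at hc
      exact hξ (by
        rw [show cslice (U ∩ V) ξ = cslice U ξ ∩ cslice V ξ from cslice_inter U V ξ]
        exact ih _ _ hc.1 hc.2)
    refine lt_of_le_of_lt (Cardinal.mk_le_mk_of_subset hsub) ?_
    refine lt_of_le_of_lt (Cardinal.mk_union_le _ _) ?_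
    exact Cardinal.add_lt_of_lt (Cardinal.aleph0_le_mk K) (hU h.1) (hV h.2)

theorem cisOpen_sUnion (K : Type u) (m : ℕ) (S : Set (Set (Option (CIdx K m))))
    (hS : ∀ U ∈ S, CIsOpen K m U) : CIsOpen K m (⋃₀ S) := by
  by_cases h : none ∈ ⋃₀ S
  · obtain ⟨U, hUS, hU⟩ := h
    exact cisOpen_mono K m U _ (hS U hUS) (Set.subset_sUnion_of_mem hUS) (fun _ => hU)
  · exact cisOpen_of_none_not_mem _ _ _ h

/-- The space `C⁻(α, m+1)` from the paper (so `m = 0` gives `C(α)` itself);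
`K` plays the role of the set of ordinals `< α` and `none` plays the role of `∞`. -/
def CTop (K : Type u) [Infinite K] (m : ℕ) : TopologicalSpace (Option (CIdx K m)) where
  IsOpen := CIsOpen K m
  isOpen_univ := cisOpen_univ K m
  isOpen_inter := cisOpen_inter K m
  isOpen_sUnion := cisOpen_sUnion K m

instance instCTop (K : Type u) [Infinite K] (m : ℕ) : TopologicalSpace (Option (CIdx K m)) :=
  CTop K m

section Stmt14Aux

open Cardinal

/-- slice of a subset of a product -/
def islice {K J : Type u} (C : Set (K × J)) (ξ : K) : Set J := {x | (ξ, x) ∈ C}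

/-- the ideal of "small" sets of `CIdx K m` (dual to the nbhd filter of `∞`) -/
def ISmall (K : Type u) : (m : ℕ) → Set (CIdx K m) → Prop
  | 0, C => Cardinal.mk C < Cardinal.mk K
  | m + 1, C => Cardinal.mk {ξ : K | ¬ ISmall K m (islice C ξ)} < Cardinal.mk K

theorem ismall_zero {K : Type u} (C : Set (CIdx K 0)) :
    ISmall K 0 C ↔ Cardinal.mk C < Cardinal.mk K := Iff.rfl

theorem ismall_succ {K : Type u} (m : ℕ) (C : Set (CIdx K (m + 1))) :
    ISmall K (m + 1) C ↔
      Cardinal.mk {ξ : K | ¬ ISmall K m (islice C ξ)} < Cardinal.mk K := Iff.rfl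

theorem ismall_mono {K : Type u} (m : ℕ) {C C' : Set (CIdx K m)} (h : C ⊆ C')
    (h' : ISmall K m C') : ISmall K m C := by
  induction m with
  | zero => exact lt_of_le_of_lt (Cardinal.mk_le_mk_of_subset h) h'
  | succ m ih =>
    refine lt_of_le_of_lt (Cardinal.mk_le_mk_of_subset ?_) h'
    intro ξ hξ hsm
    exact hξ (ih (fun x hx => h hx) hsm)

theorem mk_biUnion_lt {K : Type u} {J : Type u} (hreg : (Cardinal.mk K).IsRegular)
    {ι : Type u} {s : Set ι} (hs : Cardinal.mk s < Cardinal.mk K)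
    {A : ι → Set J} (hA : ∀ i ∈ s, Cardinal.mk (A i) < Cardinal.mk K) :
    Cardinal.mk (⋃ i ∈ s, A i) < Cardinal.mk K := by
  rw [Set.biUnion_eq_iUnion]
  refine lt_of_le_of_lt (Cardinal.mk_iUnion_le_sum_mk) ?_
  exact Cardinal.sum_lt_of_isRegular hreg hs (fun i => hA i i.2)

theorem islice_biUnion {K J : Type u} {ι : Type u} (s : Set ι) (A : ι → Set (K × J)) (ξ : K) :
    islice (⋃ i ∈ s, A i) ξ = ⋃ i ∈ s, islice (A i) ξ := by
  ext x; simp [islice]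

theorem ismall_biUnion {K : Type u} (hreg : (Cardinal.mk K).IsRegular) {m : ℕ}
    {ι : Type u} {s : Set ι} (hs : Cardinal.mk s < Cardinal.mk K)
    {A : ι → Set (CIdx K m)} (hA : ∀ i ∈ s, ISmall K m (A i)) :
    ISmall K m (⋃ i ∈ s, A i) := by
  induction m with
  | zero => exact mk_biUnion_lt hreg hs hA
  | succ m ih =>
    rw [ismall_succ]
    have hsub : {ξ : K | ¬ ISmall K m (islice (⋃ i ∈ s, A i) ξ)} ⊆
        ⋃ i ∈ s, {ξ : K | ¬ ISmall K m (islice (A i) ξ)} := by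
      intro ξ hξ
      by_contra hc
      simp only [Set.mem_iUnion, Set.mem_setOf_eq, not_exists, not_not] at hc
      refine hξ ?_
      erw [islice_biUnion]
      exact ih (fun i hi => hc i hi)
    refine lt_of_le_of_lt (Cardinal.mk_le_mk_of_subset hsub) ?_
    exact mk_biUnion_lt hreg hs (fun i hi => hA i hi)

theorem ismall_union {K : Type u} [Infinite K] (m : ℕ) {A B : Set (CIdx K m)}
    (hA : ISmall K m A) (hB : ISmall K m B) : ISmall K m (A ∪ B) := by
  induction m with
  | zero =>
    refine lt_of_le_of_lt (Cardinal.mk_union_le _ _) ?_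
    exact Cardinal.add_lt_of_lt (Cardinal.aleph0_le_mk K) hA hB
  | succ m ih =>
    rw [ismall_succ]
    have hsub : {ξ : K | ¬ ISmall K m (islice (A ∪ B) ξ)} ⊆
        {ξ : K | ¬ ISmall K m (islice A ξ)} ∪ {ξ : K | ¬ ISmall K m (islice B ξ)} := by
      intro ξ hξ
      by_contra hc
      simp only [Set.mem_union, Set.mem_setOf_eq, not_or, not_not] at hc
      exact hξ (ih hc.1 hc.2)
    refine lt_of_le_of_lt (Cardinal.mk_le_mk_of_subset hsub) ?_
    refine lt_of_le_of_lt (Cardinal.mk_union_le _ _) ?_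
    exact Cardinal.add_lt_of_lt (Cardinal.aleph0_le_mk K) hA hB

theorem not_ismall_univ {K : Type u} (m : ℕ) : ¬ ISmall K m (Set.univ : Set (CIdx K m)) := by
  induction m with
  | zero => rw [ismall_zero, Cardinal.mk_univ]; exact lt_irrefl _
  | succ m ih =>
    rw [ismall_succ]
    have : {ξ : K | ¬ ISmall K m (islice (Set.univ : Set (CIdx K (m+1))) ξ)} = Set.univ := by
      ext ξ
      simp only [Set.mem_setOf_eq, Set.mem_univ, iff_true]
      have : islice (Set.univ : Set (CIdx K (m+1))) ξ = Set.univ := by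
        ext x; simp [islice]; exact trivial
      rw [this]; exact ih
    rw [this, Cardinal.mk_univ]
    exact lt_irrefl _

theorem ismall_empty {K : Type u} [Infinite K] (m : ℕ) : ISmall K m (∅ : Set (CIdx K m)) := by
  induction m with
  | zero =>
    rw [ismall_zero, Cardinal.mk_emptyCollection]
    exact lt_of_lt_of_le Cardinal.aleph0_pos (Cardinal.aleph0_le_mk K)
  | succ m ih =>
    rw [ismall_succ]
    have : {ξ : K | ¬ ISmall K m (islice (∅ : Set (CIdx K (m+1))) ξ)} = ∅ := by
      ext ξ
      simp only [Set.mem_setOf_eq, Set.mem_empty_iff_false, iff_false, not_not]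
      have : islice (∅ : Set (CIdx K (m+1))) ξ = ∅ := by ext x; simp [islice]; exact id
      rw [this]; exact ih
    rw [this, Cardinal.mk_emptyCollection]
    exact lt_of_lt_of_le Cardinal.aleph0_pos (Cardinal.aleph0_le_mk K)

end Stmt14Aux


section Stmt14Main

theorem one_lt_mk (K : Type u) [Infinite K] : (1 : Cardinal) < Cardinal.mk K :=
  Cardinal.one_lt_aleph0.trans_le (Cardinal.aleph0_le_mk K)

theorem ismall_succ_of_all {K : Type u} [Infinite K] {m : ℕ} {C : Set (CIdx K (m + 1))}
    (h : ∀ ξ : K, ISmall K m (islice C ξ)) : ISmall K (m + 1) C := by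
  rw [ismall_succ]
  have he : {ξ : K | ¬ ISmall K m (islice C ξ)} = ∅ := by
    ext ξ; simp only [Set.mem_setOf_eq, Set.mem_empty_iff_false, iff_false, not_not]; exact h ξ
  rw [he, Cardinal.mk_emptyCollection]
  exact lt_of_lt_of_le Cardinal.aleph0_pos (Cardinal.aleph0_le_mk K)

theorem ismall_fst_eq {K : Type u} [Infinite K] (m : ℕ) (η : K) :
    ISmall K (m + 1) {p : K × CIdx K m | p.1 = η} := by
  rw [ismall_succ]
  have hsub : {ξ : K | ¬ ISmall K m (islice {p : K × CIdx K m | p.1 = η} ξ)} ⊆ {η} := by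
    intro ξ hξ
    by_contra hne
    have hemp : islice {p : K × CIdx K m | p.1 = η} ξ = ∅ := by
      ext x
      simp only [islice, Set.mem_setOf_eq, Set.mem_empty_iff_false, iff_false]
      exact fun h => hne (by simpa using h)
    exact hξ (by rw [hemp]; exact ismall_empty m)
  refine lt_of_le_of_lt (Cardinal.mk_le_mk_of_subset hsub) ?_
  rw [Cardinal.mk_singleton]
  exact one_lt_mk K

/-- The key combinatorial theorem: for any positive `P ⊆ αⁿ` and any
`g : αⁿ → αⁿ⁺¹`, there is a small `C` whose `g`-preimage meets `P` in a positive set. -/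
theorem main_no_prime {K : Type u} [Infinite K] (hreg : (Cardinal.mk K).IsRegular) :
    ∀ (m : ℕ) (g : CIdx K m → CIdx K (m + 1)) (P : Set (CIdx K m)), ¬ ISmall K m P →
      ∃ C : Set (CIdx K (m + 1)), ISmall K (m + 1) C ∧ ¬ ISmall K m (P ∩ g ⁻¹' C) := by
  intro m
  induction m with
  | zero =>
    intro g P hP
    by_cases hfib : ∃ η : K, ¬ ISmall K 0 (P ∩ {x | (g x).1 = η})
    · obtain ⟨η, hη⟩ := hfib
      refine ⟨{p : K × CIdx K 0 | p.1 = η}, ismall_fst_eq 0 η, ?_⟩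
      exact hη
    · push_neg at hfib
      refine ⟨{p : K × CIdx K 0 | ∃ x, x ∈ P ∧ (g x).1 = p.1 ∧ (g x).2 = p.2}, ?_, ?_⟩
      · refine ismall_succ_of_all (fun η => ?_)
        have him : islice {p : K × CIdx K 0 | ∃ x, x ∈ P ∧ (g x).1 = p.1 ∧ (g x).2 = p.2} η
            = (fun x => (g x).2) '' (P ∩ {x | (g x).1 = η}) := by
          ext y
          simp only [islice, Set.mem_setOf_eq, Set.mem_image, Set.mem_inter_iff]
          constructor
          · rintro ⟨x, hx, h1, h2⟩; exact ⟨x, ⟨hx, h1⟩, h2⟩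
          · rintro ⟨x, ⟨hx, h1⟩, h2⟩; exact ⟨x, hx, h1, h2⟩
        rw [ismall_zero]; erw [him]
        exact lt_of_le_of_lt Cardinal.mk_image_le (hfib η)
      · have heq : P ∩ (g ⁻¹' {p : K × CIdx K 0 | ∃ x, x ∈ P ∧ (g x).1 = p.1 ∧ (g x).2 = p.2})
            = P := by
          apply Set.inter_eq_self_of_subset_left
          intro x hx
          exact ⟨x, hx, rfl, rfl⟩
        rw [heq]
        exact hP
  | succ m ih =>
    intro g P hP
    rw [ismall_succ] at hP
    -- choose witnesses `D ξ` for each positive slice, using the induction hypothesis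
    have hDex : ∀ ξ : K, ∃ DC : Set (CIdx K (m + 1)),
        ¬ ISmall K m (islice P ξ) →
          (ISmall K (m + 1) DC ∧
            ¬ ISmall K m (islice P ξ ∩ (fun x => (g (ξ, x)).2) ⁻¹' DC)) := by
      intro ξ
      by_cases hξ : ISmall K m (islice P ξ)
      · exact ⟨∅, fun h => absurd hξ h⟩
      · obtain ⟨C, h1, h2⟩ := ih (fun x => (g (ξ, x)).2) (islice P ξ) hξ
        exact ⟨C, fun _ => ⟨h1, h2⟩⟩
    choose D hD using hDex
    -- notation
    let Q : K → Set (CIdx K m) := fun ξ => islice P ξ ∩ (fun x => (g (ξ, x)).2) ⁻¹' (D ξ)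
    let Fib : K → Prop := fun ξ => ∃ η : K, ¬ ISmall K m (Q ξ ∩ {x | (g (ξ, x)).1 = η})
    let Zf : Set K := {ξ | (¬ ISmall K m (islice P ξ)) ∧ Fib ξ}
    let Zd : Set K := {ξ | (¬ ISmall K m (islice P ξ)) ∧ ¬ Fib ξ}
    have hcases : ¬ Cardinal.mk Zf < Cardinal.mk K ∨ ¬ Cardinal.mk Zd < Cardinal.mk K := by
      by_contra hc
      push_neg at hc
      apply hP
      have hsub : {ξ : K | ¬ ISmall K m (islice P ξ)} ⊆ Zf ∪ Zd := by
        intro ξ hξ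
        by_cases hf : Fib ξ
        · exact Or.inl ⟨hξ, hf⟩
        · exact Or.inr ⟨hξ, hf⟩
      refine lt_of_le_of_lt (Cardinal.mk_le_mk_of_subset hsub) ?_
      refine lt_of_le_of_lt (Cardinal.mk_union_le _ _) ?_
      exact Cardinal.add_lt_of_lt (Cardinal.aleph0_le_mk K) hc.1 hc.2
    rcases hcases with hA | hB
    · -- Case A : many slices have a positive fiber of the first coordinate of g
      have hηex : ∀ ξ : K, ∃ η : K, ξ ∈ Zf →
          ¬ ISmall K m (Q ξ ∩ {x | (g (ξ, x)).1 = η}) := by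
        intro ξ
        by_cases hξ : ξ ∈ Zf
        · obtain ⟨η, hη⟩ := hξ.2
          exact ⟨η, fun _ => hη⟩
        · exact ⟨Classical.arbitrary K, fun h => absurd h hξ⟩
      choose ηs hηs using hηex
      by_cases hA1 : ∃ η : K, ¬ Cardinal.mk {ξ | ξ ∈ Zf ∧ ηs ξ = η} < Cardinal.mk K
      · -- Subcase A1 : one value η* is chosen cofinally often
        obtain ⟨η, hη⟩ := hA1
        refine ⟨{p : K × CIdx K (m + 1) | p.1 = η}, ismall_fst_eq (m + 1) η, ?_⟩
        rw [ismall_succ]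
        intro hsm
        apply hη
        have hsub : {ξ | ξ ∈ Zf ∧ ηs ξ = η} ⊆
            {ξ : K | ¬ ISmall K m (islice (P ∩ g ⁻¹' {p : K × CIdx K (m+1) | p.1 = η}) ξ)} := by
          rintro ξ ⟨hξf, hξη⟩
          intro hsl
          refine hηs ξ hξf ?_
          rw [hξη]
          refine ismall_mono m ?_ hsl
          rintro x ⟨hxQ, hxη⟩
          exact ⟨hxQ.1, hxη⟩
        exact lt_of_le_of_lt (Cardinal.mk_le_mk_of_subset hsub) hsm
      · -- Subcase A2 : all values chosen rarely; pick a transversal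
        push_neg at hA1
        have him : ¬ Cardinal.mk (ηs '' Zf) < Cardinal.mk K := by
          intro hlt
          apply hA
          have hsub : Zf ⊆ ⋃ v ∈ ηs '' Zf, {ξ | ξ ∈ Zf ∧ ηs ξ = v} := by
            intro ξ hξ
            exact Set.mem_biUnion (Set.mem_image_of_mem ηs hξ) ⟨hξ, rfl⟩
          exact lt_of_le_of_lt (Cardinal.mk_le_mk_of_subset hsub)
            (mk_biUnion_lt hreg hlt (fun v _ => hA1 v))
        have hsecex : ∀ v : K, ∃ ξ : K, v ∈ ηs '' Zf → (ξ ∈ Zf ∧ ηs ξ = v) := by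
          intro v
          by_cases hv : v ∈ ηs '' Zf
          · obtain ⟨ξ, hξ, hξv⟩ := hv
            exact ⟨ξ, fun _ => ⟨hξ, hξv⟩⟩
          · exact ⟨Classical.arbitrary K, fun h => absurd h hv⟩
        choose sec hsec using hsecex
        refine ⟨{p : K × CIdx K (m + 1) | p.1 ∈ ηs '' Zf ∧ p.2 ∈ D (sec p.1)}, ?_, ?_⟩
        · refine ismall_succ_of_all (fun η => ?_)
          by_cases hη : η ∈ ηs '' Zf
          · have hsl : islice {p : K × CIdx K (m+1) | p.1 ∈ ηs '' Zf ∧ p.2 ∈ D (sec p.1)} η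
                = D (sec η) := by
              ext y
              simp only [islice, Set.mem_setOf_eq]
              exact ⟨fun h => h.2, fun h => ⟨hη, h⟩⟩
            erw [hsl]
            exact (hD (sec η) ((hsec η hη).1).1).1
          · have hsl : islice {p : K × CIdx K (m+1) | p.1 ∈ ηs '' Zf ∧ p.2 ∈ D (sec p.1)} η
                = ∅ := by
              ext y
              simp only [islice, Set.mem_setOf_eq, Set.mem_empty_iff_false, iff_false]
              exact fun h => hη h.1
            erw [hsl]
            exact ismall_empty (K := K) (m + 1)
        · rw [ismall_succ]
          intro hsm
          apply him
          have hsub : sec '' (ηs '' Zf) ⊆ {ξ : K | ¬ ISmall K m (islice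
              (P ∩ g ⁻¹' {p : K × CIdx K (m+1) | p.1 ∈ ηs '' Zf ∧ p.2 ∈ D (sec p.1)}) ξ)} := by
            rintro ξ ⟨v, hv, rfl⟩
            intro hsl
            have hv1 : sec v ∈ Zf := (hsec v hv).1
            have hv2 : ηs (sec v) = v := (hsec v hv).2
            refine hηs (sec v) hv1 ?_
            rw [hv2]
            refine ismall_mono m ?_ hsl
            rintro x ⟨hxQ, hxη⟩
            have h1 : (g (sec v, x)).1 = v := hxη
            refine ⟨hxQ.1, ?_, ?_⟩
            · show (g (sec v, x)).1 ∈ ηs '' Zf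
              rw [h1]; exact hv
            · show (g (sec v, x)).2 ∈ D (sec ((g (sec v, x)).1))
              rw [h1]; exact hxQ.2
          have hinj : Set.InjOn sec (ηs '' Zf) := by
            intro v hv w hw hvw
            rw [← (hsec v hv).2, ← (hsec w hw).2, hvw]
          have : Cardinal.mk (sec '' (ηs '' Zf)) = Cardinal.mk (ηs '' Zf) :=
            Cardinal.mk_image_eq_of_injOn sec _ hinj
          rw [← this]
          exact lt_of_le_of_lt (Cardinal.mk_le_mk_of_subset hsub) hsm
    · -- Case B : many slices are "diffuse"
      have hdif : ∀ ξ, ξ ∈ Zd → ∀ G : Set K, Cardinal.mk G < Cardinal.mk K →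
          ¬ ISmall K m (Q ξ ∩ {x | (g (ξ, x)).1 ∉ G}) := by
        rintro ξ ⟨hξZ, hnf⟩ G hG hsm
        have hnf' : ∀ η : K, ISmall K m (Q ξ ∩ {x | (g (ξ, x)).1 = η}) := by
          intro η
          by_contra hc
          exact hnf ⟨η, hc⟩
        have hQsub : Q ξ ⊆ (Q ξ ∩ {x | (g (ξ, x)).1 ∉ G}) ∪
            ⋃ η ∈ G, (Q ξ ∩ {x | (g (ξ, x)).1 = η}) := by
          intro x hx
          by_cases hxg : (g (ξ, x)).1 ∈ G
          · exact Or.inr (Set.mem_biUnion hxg ⟨hx, rfl⟩)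
          · exact Or.inl ⟨hx, hxg⟩
        have : ISmall K m (Q ξ) := by
          refine ismall_mono m hQsub ?_
          exact ismall_union m hsm (ismall_biUnion hreg hG (fun η _ => hnf' η))
        exact (hD ξ hξZ).2 this
      obtain ⟨r, wo, hord⟩ := Cardinal.ord_eq K
      haveI := wo
      have hpred : ∀ t : K, Cardinal.mk {η : K | r η t} < Cardinal.mk K := by
        intro t
        have h1 : Cardinal.mk {η : K | r η t} = (Ordinal.typein r t).card :=
          Ordinal.card_typein t
        rw [h1]
        refine Cardinal.lt_ord.mp ?_
        rw [hord]
        exact Ordinal.typein_lt_type r t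
      have hinit : ∀ t : K, Cardinal.mk {η : K | ¬ r t η} < Cardinal.mk K := by
        intro t
        have hsub : {η : K | ¬ r t η} ⊆ insert t {η : K | r η t} := by
          intro η hη
          rcases trichotomous_of r η t with h | h | h
          · exact Set.mem_insert_iff.mpr (Or.inr h)
          · exact Set.mem_insert_iff.mpr (Or.inl h)
          · exact absurd h hη
        refine lt_of_le_of_lt (Cardinal.mk_le_mk_of_subset hsub) ?_
        refine lt_of_le_of_lt Cardinal.mk_insert_le ?_
        exact Cardinal.add_lt_of_lt (Cardinal.aleph0_le_mk K) (hpred t) (one_lt_mk K)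
      have hemb : Nonempty (K ↪ Zd) := by
        rw [← Cardinal.le_def]
        exact not_lt.mp hB
      obtain ⟨ι⟩ := hemb
      refine ⟨{p : K × CIdx K (m + 1) | ∃ t : K, r t p.1 ∧ p.2 ∈ D ((ι t : K))}, ?_, ?_⟩
      · refine ismall_succ_of_all (fun η => ?_)
        have hsl : islice {p : K × CIdx K (m+1) | ∃ t : K, r t p.1 ∧ p.2 ∈ D ((ι t : K))} η
            = ⋃ t ∈ {t : K | r t η}, D ((ι t : K)) := by
          ext y
          simp only [islice, Set.mem_setOf_eq, Set.mem_iUnion, exists_prop]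
        erw [hsl]
        exact ismall_biUnion hreg (hpred η) (fun t _ => (hD ((ι t : K)) (ι t).2.1).1)
      · rw [ismall_succ]
        intro hsm
        have hsub : Set.range (fun t : K => ((ι t : K))) ⊆ {ξ : K | ¬ ISmall K m (islice
            (P ∩ g ⁻¹' {p : K × CIdx K (m+1) | ∃ t : K, r t p.1 ∧ p.2 ∈ D ((ι t : K))}) ξ)} := by
          rintro ξ ⟨t, rfl⟩
          intro hsl
          refine hdif ((ι t : K)) (ι t).2 {η : K | ¬ r t η} (hinit t) ?_
          refine ismall_mono m ?_ hsl
          rintro x ⟨hxQ, hxr⟩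
          have hxr' : r t ((g ((ι t : K), x)).1) := not_not.mp hxr
          refine ⟨hxQ.1, ?_⟩
          exact ⟨t, hxr', hxQ.2⟩
        have hrange : Cardinal.mk (Set.range (fun t : K => ((ι t : K)))) = Cardinal.mk K :=
          Cardinal.mk_range_eq _ (Subtype.val_injective.comp ι.injective)
        have hlt := lt_of_le_of_lt (Cardinal.mk_le_mk_of_subset hsub) hsm
        rw [hrange] at hlt
        exact lt_irrefl _ hlt

end Stmt14Main


section Stmt14Bridge

theorem cisOpen_iff_ismall {K : Type u} : ∀ (m : ℕ) (U : Set (Option (CIdx K m))), none ∈ U →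
    (CIsOpen K m U ↔ ISmall K m ((Option.some ⁻¹' U)ᶜ)) := by
  intro m
  induction m with
  | zero =>
    intro U hU
    exact ⟨fun h => h hU, fun h _ => h⟩
  | succ m ih =>
    intro U hU
    have hslice : ∀ ξ : K, CIsOpen K m (cslice U ξ) ↔
        ISmall K m (islice ((Option.some ⁻¹' U)ᶜ) ξ) := by
      intro ξ
      have h1 := ih (cslice U ξ) (none_mem_cslice U ξ)
      have h2 : (Option.some ⁻¹' (cslice U ξ))ᶜ = islice ((Option.some ⁻¹' U)ᶜ) ξ := by
        ext x
        simp [islice, some_mem_cslice_iff]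
        exact not_congr (some_mem_cslice_iff U ξ x)
      rw [h2] at h1
      exact h1
    have hset : {ξ : K | ¬ ISmall K m (islice ((Option.some ⁻¹' U)ᶜ) ξ)} =
        ({ξ : K | CIsOpen K m (cslice U ξ)}ᶜ : Set K) := by
      ext ξ
      simp only [Set.mem_setOf_eq, Set.mem_compl_iff, hslice ξ]
    constructor
    · intro h
      rw [ismall_succ]; erw [hset]
      exact h hU
    · intro h _
      rw [ismall_succ] at h; erw [hset] at h
      exact h

end Stmt14Bridge


/-- for a regular cardinal `α ≥ ω₁` (the cardinality of `K`) and `0 < n < ω`,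
there is no prime map from `C⁻(α,n)` to `C⁻(α,n+1)`, i.e. no continuous map with
`f ⁻¹' {∞} = {∞}`.  Here `CTop K m` (the instance topology on `Option (CIdx K m)`) is
`C⁻(α, m+1)` and `none` is the point `∞`. -/
theorem stmt14 (K : Type u) [Infinite K] (hreg : (Cardinal.mk K).IsRegular)
    (hω1 : Cardinal.aleph 1 ≤ Cardinal.mk K) (m : ℕ) :
    ¬ ∃ f : Option (CIdx K m) → Option (CIdx K (m + 1)),
        Continuous f ∧ f ⁻¹' {none} = {none} := by
  rintro ⟨f, hcont, hpre⟩
  have hfnone : f none = none := by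
    have h : (none : Option (CIdx K m)) ∈ f ⁻¹' {none} := by rw [hpre]; rfl
    simpa using h
  have hsome : ∀ x : CIdx K m, (f (some x)).isSome := by
    intro x
    rcases h : f (some x) with _ | y
    · exfalso
      have hx : some x ∈ f ⁻¹' ({none} : Set (Option (CIdx K (m+1)))) := by simp [h]
      rw [hpre] at hx
      simp at hx
    · rfl
  let g : CIdx K m → CIdx K (m + 1) := fun x => (f (some x)).get (hsome x)
  have hg : ∀ x, f (some x) = some (g x) := fun x => (Option.some_get (hsome x)).symm
  have gsmall : ∀ C : Set (CIdx K (m + 1)), ISmall K (m + 1) C → ISmall K m (g ⁻¹' C) := by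
    intro C hC
    set V : Set (Option (CIdx K (m + 1))) := insert none (Option.some '' Cᶜ) with hVdef
    have hVnone : none ∈ V := Set.mem_insert _ _
    have hVsmall : (Option.some ⁻¹' V)ᶜ = C := by
      ext y
      simp [hVdef]
    have hVopen : CIsOpen K (m + 1) V :=
      (cisOpen_iff_ismall (m + 1) V hVnone).mpr (by rw [hVsmall]; exact hC)
    have hopen : CIsOpen K m (f ⁻¹' V) := hcont.isOpen_preimage V hVopen
    have hmem : none ∈ f ⁻¹' V := by
      simp only [Set.mem_preimage, hfnone]
      exact hVnone
    have hsm := (cisOpen_iff_ismall m (f ⁻¹' V) hmem).mp hopen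
    have heq : (Option.some ⁻¹' (f ⁻¹' V))ᶜ = g ⁻¹' C := by
      ext x
      simp only [Set.mem_compl_iff, Set.mem_preimage, hg x, hVdef]
      simp
    rw [heq] at hsm
    exact hsm
  obtain ⟨C, hC, hbad⟩ := main_no_prime hreg m g Set.univ (not_ismall_univ m)
  rw [Set.univ_inter] at hbad
  exact hbad (gsmall C hC)
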